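/- Let d > 0 be a real number, x₀ ∈ ℝ, and let n : ℝ → ℝ be continuous and integrable with n(ξ) ≤ 0 for all ξ ≤ x₀ and n(ξ) ≥ 0 for all ξ ≥ x₀. Set v := p_d ∗ n. Then v is differentiable and: v'(x) ≥ −(1/√d)·v(x) for every x ≥ x₀; v'(x) ≥ (1/√d)·v(x) for every x ≤ x₀; consequently v'(x) ≥ −(1/√d)·|v(x)| for every x ∈ ℝ. -/

import Mathlib

open MeasureTheory Set

/-- The kernel `p_d(x) = (1/(2√d)) exp(-|x|/√d)`. -/
noncomputable def pd (d : ℝ) (x : ℝ) : ℝ :=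
  1 / (2 * Real.sqrt d) * Real.exp (-|x| / Real.sqrt d)

private theorem aux_integral_Ioi_sub_Ioi {f : ℝ → ℝ} {a b : ℝ}
    (ha : IntegrableOn f (Ioi a)) (hb : IntegrableOn f (Ioi b)) :
    (∫ x in Ioi a, f x) - ∫ x in Ioi b, f x = ∫ x in a..b, f x := by
  wlog hab : a ≤ b generalizing a b
  · rw [intervalIntegral.integral_symm, ← this hb ha (le_of_not_ge hab), neg_sub]
  rw [sub_eq_iff_eq_add', intervalIntegral.integral_of_le hab, add_comm,
    ← setIntegral_union (Ioc_disjoint_Ioi le_rfl) measurableSet_Ioi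
      (ha.mono_set Ioc_subset_Ioi_self) hb, Ioc_union_Ioi_eq_Ioi hab]

private theorem aux_key (s : ℝ) (hs : 0 < s) (x₀ : ℝ) (n : ℝ → ℝ)
    (hc : Continuous n) (hi : MeasureTheory.Integrable n)
    (hneg : ∀ ξ : ℝ, ξ ≤ x₀ → n ξ ≤ 0) (hpos : ∀ ξ : ℝ, x₀ ≤ ξ → 0 ≤ n ξ)
    (v : ℝ → ℝ)
    (hv : v = fun x => ∫ ξ : ℝ, (1 / (2 * s) * Real.exp (-|x - ξ| / s)) * n ξ) :
    Differentiable ℝ v ∧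
    (∀ x : ℝ, x₀ ≤ x → deriv v x ≥ -(1 / s) * v x) ∧
    (∀ x : ℝ, x ≤ x₀ → deriv v x ≥ (1 / s) * v x) ∧
    (∀ x : ℝ, deriv v x ≥ -(1 / s) * |v x|) := by
  set c : ℝ := 1 / (2 * s) with hcdef
  have hcpos : 0 < c := by positivity
  set g : ℝ → ℝ := fun ξ => Real.exp (ξ / s) * n ξ with hgdef
  set h : ℝ → ℝ := fun ξ => Real.exp (-ξ / s) * n ξ with hhdef
  have hgc : Continuous g := (Real.continuous_exp.comp (continuous_id.div_const s)).mul hc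
  have hhc : Continuous h := (Real.continuous_exp.comp (continuous_id.neg.div_const s)).mul hc
  -- integrability of g on Iic b
  have hgi : ∀ b : ℝ, IntegrableOn g (Iic b) := by
    intro b
    refine Integrable.mono' ((hi.abs.const_mul (Real.exp (b / s))).restrict)
      hgc.aestronglyMeasurable.restrict ?_
    filter_upwards [ae_restrict_mem measurableSet_Iic] with ξ hξ
    have h1 : Real.exp (ξ / s) ≤ Real.exp (b / s) := by
      apply Real.exp_le_exp.mpr; exact div_le_div_of_nonneg_right hξ hs.le
    have : ‖g ξ‖ = Real.exp (ξ / s) * |n ξ| := by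
      rw [hgdef]; simp [abs_mul, abs_of_pos (Real.exp_pos _)]
    rw [this]
    exact mul_le_mul_of_nonneg_right h1 (abs_nonneg _)
  -- integrability of h on Ioi b
  have hhi : ∀ b : ℝ, IntegrableOn h (Ioi b) := by
    intro b
    refine Integrable.mono' ((hi.abs.const_mul (Real.exp (-b / s))).restrict)
      hhc.aestronglyMeasurable.restrict ?_
    filter_upwards [ae_restrict_mem measurableSet_Ioi] with ξ hξ
    have hξ' : b ≤ ξ := le_of_lt hξ
    have h1 : Real.exp (-ξ / s) ≤ Real.exp (-b / s) := by
      apply Real.exp_le_exp.mpr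
      exact div_le_div_of_nonneg_right (neg_le_neg hξ') hs.le
    have : ‖h ξ‖ = Real.exp (-ξ / s) * |n ξ| := by
      rw [hhdef]; simp [abs_mul, abs_of_pos (Real.exp_pos _)]
    rw [this]
    exact mul_le_mul_of_nonneg_right h1 (abs_nonneg _)
  -- F and G and their derivatives
  have hFder : ∀ x : ℝ, HasDerivAt (fun y => ∫ ξ in Iic y, g ξ) (g x) x := by
    intro x
    have heq : (fun y => ∫ ξ in Iic y, g ξ)
        = fun y => (∫ ξ in Iic (0 : ℝ), g ξ) + ∫ t in (0 : ℝ)..y, g t := by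
      funext y
      have := intervalIntegral.integral_Iic_sub_Iic (hgi 0) (hgi y)
      linarith
    rw [heq]
    exact ((hgc.integral_hasStrictDerivAt 0 x).hasDerivAt).const_add _
  have hGder : ∀ x : ℝ, HasDerivAt (fun y => ∫ ξ in Ioi y, h ξ) (-(h x)) x := by
    intro x
    have heq : (fun y => ∫ ξ in Ioi y, h ξ)
        = fun y => (∫ ξ in Ioi (0 : ℝ), h ξ) - ∫ t in (0 : ℝ)..y, h t := by
      funext y
      have := aux_integral_Ioi_sub_Ioi (hhi 0) (hhi y)
      linarith
    rw [heq]
    exact ((hhc.integral_hasStrictDerivAt 0 x).hasDerivAt).const_sub _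
  -- the convolution kernel integrand is integrable and splits
  have hki : ∀ x : ℝ, Integrable (fun ξ => (c * Real.exp (-|x - ξ| / s)) * n ξ) := by
    intro x
    refine Integrable.mono' (hi.abs.const_mul c) ?_ ?_
    · apply Continuous.aestronglyMeasurable
      exact ((continuous_const.mul (Real.continuous_exp.comp
        (((continuous_const.sub continuous_id).abs.neg).div_const s))).mul hc)
    · filter_upwards with ξ
      have h1 : Real.exp (-|x - ξ| / s) ≤ 1 := by
        rw [← Real.exp_zero]
        apply Real.exp_le_exp.mpr
        apply div_nonpos_of_nonpos_of_nonneg (neg_nonpos.mpr (abs_nonneg _)) hs.le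
      have h2 : (0:ℝ) < Real.exp (-|x - ξ| / s) := Real.exp_pos _
      have : ‖c * Real.exp (-|x - ξ| / s) * n ξ‖
          = c * Real.exp (-|x - ξ| / s) * |n ξ| := by
        simp [abs_mul, abs_of_pos hcpos, abs_of_pos h2]
      rw [this]
      apply mul_le_mul_of_nonneg_right _ (abs_nonneg _)
      nlinarith
  -- the formula for v
  have hvx : v = fun x => c * Real.exp (-x / s) * (∫ ξ in Iic x, g ξ)
      + c * Real.exp (x / s) * (∫ ξ in Ioi x, h ξ) := by
    rw [hv]
    funext x
    have hsplit := intervalIntegral.integral_Iic_add_Ioi (b := x)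
      ((hki x).integrableOn) ((hki x).integrableOn)
    have h1 : ∫ ξ in Iic x, (c * Real.exp (-|x - ξ| / s)) * n ξ
        = c * Real.exp (-x / s) * ∫ ξ in Iic x, g ξ := by
      rw [← MeasureTheory.integral_const_mul]
      apply setIntegral_congr_fun measurableSet_Iic
      intro ξ hξ
      simp only [Set.mem_Iic] at hξ
      have habs : |x - ξ| = x - ξ := abs_of_nonneg (by linarith)
      have hexp : Real.exp (-(x - ξ) / s)
          = Real.exp (-x / s) * Real.exp (ξ / s) := by
        rw [← Real.exp_add]
        congr 1
        field_simp
        ring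
      rw [hgdef]
      simp only [habs, hexp]
      ring
    have h2 : ∫ ξ in Ioi x, (c * Real.exp (-|x - ξ| / s)) * n ξ
        = c * Real.exp (x / s) * ∫ ξ in Ioi x, h ξ := by
      rw [← MeasureTheory.integral_const_mul]
      apply setIntegral_congr_fun measurableSet_Ioi
      intro ξ hξ
      simp only [Set.mem_Ioi] at hξ
      have habs : |x - ξ| = ξ - x := by
        rw [abs_of_nonpos (by linarith)]; ring
      have hexp : Real.exp (-(ξ - x) / s)
          = Real.exp (x / s) * Real.exp (-ξ / s) := by
        rw [← Real.exp_add]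
        congr 1
        field_simp
        ring
      rw [hhdef]
      simp only [habs, hexp]
      ring
    rw [← hsplit, h1, h2]
  -- derivative of v
  have hvder : ∀ x : ℝ,
      HasDerivAt v ((1 / s) * (c * Real.exp (x / s) * (∫ ξ in Ioi x, h ξ)
        - c * Real.exp (-x / s) * (∫ ξ in Iic x, g ξ))) x := by
    intro x
    have e1 : HasDerivAt (fun y : ℝ => Real.exp (-y / s))
        (Real.exp (-x / s) * (-1 / s)) x := by
      have h1 : HasDerivAt (fun y : ℝ => -y / s) (-1 / s) x := by
        simpa using ((hasDerivAt_id x).neg.div_const s)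
      simpa using h1.exp
    have e2 : HasDerivAt (fun y : ℝ => Real.exp (y / s))
        (Real.exp (x / s) * (1 / s)) x := by
      have h1 : HasDerivAt (fun y : ℝ => y / s) (1 / s) x := by
        simpa using ((hasDerivAt_id x).div_const s)
      simpa using h1.exp
    have d1 := (e1.const_mul c).mul (hFder x)
    have d2 := (e2.const_mul c).mul (hGder x)
    have dtot := d1.add d2
    rw [hvx]
    convert dtot using 1
    · rfl
    · rfl
    · rfl
    rw [hgdef, hhdef]
    simp only
    ring
  have hdiff : Differentiable ℝ v := fun x => (hvder x).differentiableAt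
  have hderiv : ∀ x : ℝ, deriv v x
      = (1 / s) * (c * Real.exp (x / s) * (∫ ξ in Ioi x, h ξ)
        - c * Real.exp (-x / s) * (∫ ξ in Iic x, g ξ)) := fun x => (hvder x).deriv
  have hvval : ∀ x : ℝ, v x = c * Real.exp (-x / s) * (∫ ξ in Iic x, g ξ)
      + c * Real.exp (x / s) * (∫ ξ in Ioi x, h ξ) := by
    intro x; rw [hvx]
  have hspos : (0:ℝ) < 1 / s := by positivity
  -- sign facts
  have hGpos : ∀ x : ℝ, x₀ ≤ x → 0 ≤ ∫ ξ in Ioi x, h ξ := by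
    intro x hx
    apply setIntegral_nonneg measurableSet_Ioi
    intro ξ hξ
    simp only [Set.mem_Ioi] at hξ
    have := hpos ξ (by linarith)
    rw [hhdef]
    exact mul_nonneg (Real.exp_pos _).le this
  have hFneg : ∀ x : ℝ, x ≤ x₀ → (∫ ξ in Iic x, g ξ) ≤ 0 := by
    intro x hx
    apply setIntegral_nonpos measurableSet_Iic
    intro ξ hξ
    simp only [Set.mem_Iic] at hξ
    have := hneg ξ (by linarith)
    rw [hgdef]
    exact mul_nonpos_of_nonneg_of_nonpos (Real.exp_pos _).le this
  have key1 : ∀ x : ℝ, x₀ ≤ x → deriv v x ≥ -(1 / s) * v x := by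
    intro x hx
    rw [hderiv, hvval]
    have hB : 0 ≤ c * Real.exp (x / s) * (∫ ξ in Ioi x, h ξ) :=
      mul_nonneg (by positivity) (hGpos x hx)
    nlinarith
  have key2 : ∀ x : ℝ, x ≤ x₀ → deriv v x ≥ (1 / s) * v x := by
    intro x hx
    rw [hderiv, hvval]
    have hA : c * Real.exp (-x / s) * (∫ ξ in Iic x, g ξ) ≤ 0 :=
      mul_nonpos_of_nonneg_of_nonpos (by positivity) (hFneg x hx)
    nlinarith
  refine ⟨hdiff, key1, key2, ?_⟩
  intro x
  rcases le_total x x₀ with hx | hx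
  · have h1 := key2 x hx
    have h2 : -(|v x|) ≤ v x := neg_abs_le _
    nlinarith
  · have h1 := key1 x hx
    have h2 : v x ≤ |v x| := le_abs_self _
    nlinarith

/-- **Key estimate of the second global existence case.** If `n` is continuous,
integrable, `n ≤ 0` on `(-∞, x₀]` and `n ≥ 0` on `[x₀, ∞)`, and `v := p_d ∗ n`, then
`v' ≥ -(1/√d) v` for `x ≥ x₀`, `v' ≥ (1/√d) v` for `x ≤ x₀`, and hence
`v' ≥ -(1/√d)|v|` everywhere. -/
theorem deriv_convolution_sign_change (d : ℝ) (hd : 0 < d) (x₀ : ℝ) (n : ℝ → ℝ)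
    (hc : Continuous n) (hi : MeasureTheory.Integrable n)
    (hneg : ∀ ξ : ℝ, ξ ≤ x₀ → n ξ ≤ 0) (hpos : ∀ ξ : ℝ, x₀ ≤ ξ → 0 ≤ n ξ)
    (v : ℝ → ℝ) (hv : v = fun x => ∫ ξ : ℝ, pd d (x - ξ) * n ξ) :
    Differentiable ℝ v ∧
    (∀ x : ℝ, x₀ ≤ x → deriv v x ≥ -(1 / Real.sqrt d) * v x) ∧
    (∀ x : ℝ, x ≤ x₀ → deriv v x ≥ (1 / Real.sqrt d) * v x) ∧
    (∀ x : ℝ, deriv v x ≥ -(1 / Real.sqrt d) * |v x|) := by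
  exact aux_key (Real.sqrt d) (Real.sqrt_pos.mpr hd) x₀ n hc hi hneg hpos v
    (by rw [hv]; rfl)
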